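/- subStraTT is logically consistent: there is no term b and level k such that ∅ ⊢ b :^k ⊥ (no closed inhabitant of the empty type exists). -/

import Mathlib

/-! subStraTT without global definitions, in de Bruijn representation:
a single universe ⋆ with type-in-type, stratified dependent function types
`Πx:^j A. B`, abstractions, applications, the empty type and its eliminator.
Levels are natural numbers. -/

inductive Tm : Type
  | star
  | var (x : ℕ)
  | pi (j : ℕ) (A B : Tm)
  | lam (b : Tm)
  | app (b a : Tm)
  | bot
  | absurd (b : Tm)
  deriving DecidableEq

namespace Tm

/-- Shift free de Bruijn indices `≥ c` up by `d`. -/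
def shift (d c : ℕ) : Tm → Tm
  | star => star
  | var x => if x < c then var x else var (x + d)
  | pi j A B => pi j (shift d c A) (shift d (c + 1) B)
  | lam b => lam (shift d (c + 1) b)
  | app b a => app (shift d c b) (shift d c a)
  | bot => bot
  | absurd b => absurd (shift d c b)

/-- Substitute `u` for de Bruijn index `k` (decrementing greater indices). -/
def subst (k : ℕ) (u : Tm) : Tm → Tm
  | star => star
  | var x => if x < k then var x else if x = k then shift k 0 u else var (x - 1)
  | pi j A B => pi j (subst k u A) (subst (k + 1) u B)
  | lam b => lam (subst (k + 1) u b)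
  | app b a => app (subst k u b) (subst k u a)
  | bot => bot
  | absurd b => absurd (subst k u b)

end Tm

/-- Parallel reduction `a ⇒ b`: all visible β-redexes may be reduced
simultaneously in one step. -/
inductive Par : Tm → Tm → Prop
  | star : Par .star .star
  | var (x) : Par (.var x) (.var x)
  | bot : Par .bot .bot
  | pi {j A A' B B'} : Par A A' → Par B B' → Par (.pi j A B) (.pi j A' B')
  | lam {b b'} : Par b b' → Par (.lam b) (.lam b')
  | app {b b' a a'} : Par b b' → Par a a' → Par (.app b a) (.app b' a')
  | beta {b b' a a'} : Par b b' → Par a a' →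
      Par (.app (.lam b) a) (Tm.subst 0 a' b')
  | absurd {b b'} : Par b b' → Par (.absurd b) (.absurd b')

/-- `a ⇒* b`: reflexive–transitive closure of parallel reduction. -/
def Pars : Tm → Tm → Prop := Relation.ReflTransGen Par

/-- Joinability `a ⇔ b`: `a` and `b` parallel-reduce to a common term. -/
def Conv (a b : Tm) : Prop := ∃ c, Pars a c ∧ Pars b c

/-- Untyped definitional equality `a ≡ b`: the least reflexive, symmetric,
transitive congruence containing β-equivalence. -/
inductive DEq : Tm → Tm → Prop
  | refl (a) : DEq a a
  | sym : DEq a b → DEq b a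
  | trans : DEq a b → DEq b c → DEq a c
  | beta (b a) : DEq (.app (.lam b) a) (Tm.subst 0 a b)
  | pi {j A A' B B'} : DEq A A' → DEq B B' → DEq (.pi j A B) (.pi j A' B')
  | lam {b b'} : DEq b b' → DEq (.lam b) (.lam b')
  | app {b b' a a'} : DEq b b' → DEq a a' → DEq (.app b a) (.app b' a')
  | absurd {b b'} : DEq b b' → DEq (.absurd b) (.absurd b')

/-- A context entry `x :^k A` (level, type); index 0 is the most recent. -/
abbrev Ctx := List (ℕ × Tm)

mutual
  /-- Well-formed contexts. -/
  inductive CtxWf : Ctx → Prop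
    | nil : CtxWf []
    | cons {Γ k A} : CtxWf Γ → Typing Γ A k .star → CtxWf ((k, A) :: Γ)

  /-- Level-annotated typing `Γ ⊢ a :^k A` of subStraTT without global
  definitions: type-in-type, stratified dependent functions (domain at a
  strictly lower level, applications at the domain level), the empty type,
  variable subsumption, and conversion. -/
  inductive Typing : Ctx → Tm → ℕ → Tm → Prop
    | star {Γ k} : CtxWf Γ → Typing Γ .star k .star
    | var {Γ x j k A} : CtxWf Γ → Γ[x]? = some (j, A) → j ≤ k →
        Typing Γ (.var x) k (Tm.shift (x + 1) 0 A)
    | pi {Γ j k A B} : j < k → Typing Γ A j .star →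
        Typing ((j, A) :: Γ) B k .star → Typing Γ (.pi j A B) k .star
    | lam {Γ j k A B b} : j < k → Typing Γ A j .star →
        Typing ((j, A) :: Γ) b k B → Typing Γ (.lam b) k (.pi j A B)
    | app {Γ j k A B b a} : Typing Γ b k (.pi j A B) → Typing Γ a j A →
        Typing Γ (.app b a) k (Tm.subst 0 a B)
    | bot {Γ k} : CtxWf Γ → Typing Γ .bot k .star
    | absurd {Γ k b A} : Typing Γ b k .bot → Typing Γ A k .star →
        Typing Γ (.absurd b) k A
    | conv {Γ k a A B} : Typing Γ a k A → DEq A B → Typing Γ B k .star →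
        Typing Γ a k B
end

namespace Tm

/-- All free de Bruijn indices are `< c`. -/
def ClosedAbove : ℕ → Tm → Prop
  | _, star => True
  | c, var x => x < c
  | c, pi _ A B => ClosedAbove c A ∧ ClosedAbove (c+1) B
  | c, lam b => ClosedAbove (c+1) b
  | c, app b a => ClosedAbove c b ∧ ClosedAbove c a
  | _, bot => True
  | c, absurd b => ClosedAbove c b

def Closed (t : Tm) : Prop := ClosedAbove 0 t

theorem shift_var (d c x : ℕ) : shift d c (var x) = if x < c then var x else var (x + d) := rfl

theorem subst_var (k : ℕ) (u : Tm) (x : ℕ) :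
    subst k u (var x) = if x < k then var x else if x = k then shift k 0 u else var (x - 1) := rfl

theorem closedAbove_mono : ∀ (t) {c d : ℕ}, ClosedAbove c t → c ≤ d → ClosedAbove d t := by
  intro t
  induction t with
  | star =>
    intro _ _ _ _; trivial
  | var x =>
    intro c d h hcd; exact lt_of_lt_of_le h hcd
  | pi j A B ihA ihB =>
    intro c d h hcd; exact ⟨ihA h.1 hcd, ihB h.2 (by omega)⟩
  | lam b ih =>
    intro c d h hcd; exact ih h (by omega)
  | app b a ihb iha =>
    intro c d h hcd; exact ⟨ihb h.1 hcd, iha h.2 hcd⟩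
  | bot =>
    intro _ _ _ _; trivial
  | absurd b ih =>
    intro c d h hcd; exact ih h hcd

theorem shift_closed : ∀ (t) {c e : ℕ} (d), ClosedAbove c t → c ≤ e → shift d e t = t := by
  intro t
  induction t with
  | star => intros; rfl
  | var x =>
    intro c e d h hce
    have hx : x < c := h
    rw [shift_var, if_pos (by omega)]
  | pi j A B ihA ihB =>
    intro c e d h hce
    simp only [shift]; rw [ihA d h.1 hce, ihB d h.2 (by omega)]
  | lam b ih =>
    intro c e d h hce
    simp only [shift]; rw [ih d h (by omega)]
  | app b a ihb iha =>
    intro c e d h hce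
    simp only [shift]; rw [ihb d h.1 hce, iha d h.2 hce]
  | bot => intros; rfl
  | absurd b ih =>
    intro c e d h hce
    simp only [shift]; rw [ih d h hce]

theorem subst_closed : ∀ (t) {c m : ℕ} (u), ClosedAbove c t → c ≤ m → subst m u t = t := by
  intro t
  induction t with
  | star => intros; rfl
  | var x =>
    intro c m u h hcm
    have hx : x < c := h
    rw [subst_var, if_pos (by omega)]
  | pi j A B ihA ihB =>
    intro c m u h hcm
    simp only [subst]; rw [ihA u h.1 hcm, ihB u h.2 (by omega)]
  | lam b ih =>
    intro c m u h hcm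
    simp only [subst]; rw [ih u h (by omega)]
  | app b a ihb iha =>
    intro c m u h hcm
    simp only [subst]; rw [ihb u h.1 hcm, iha u h.2 hcm]
  | bot => intros; rfl
  | absurd b ih =>
    intro c m u h hcm
    simp only [subst]; rw [ih u h hcm]

theorem shift_shift : ∀ (t) {c' c : ℕ} (d d'), c' ≤ c →
    shift d (c + d') (shift d' c' t) = shift d' c' (shift d c t) := by
  intro t
  induction t with
  | star => intros; rfl
  | var x =>
    intro c' c d d' h
    simp only [shift_var]
    split_ifs <;> (try simp only [shift_var]) <;> (try split_ifs) <;>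
        (try simp only [shift_var]) <;> (try split_ifs) <;>
      first | rfl | omega | (exfalso; omega) | (congr 1; omega)
  | pi j A B ihA ihB =>
    intro c' c d d' h
    simp only [shift]
    rw [ihA d d' h, show c + d' + 1 = (c+1) + d' by omega, ihB d d' (by omega)]
  | lam b ih =>
    intro c' c d d' h
    simp only [shift]
    rw [show c + d' + 1 = (c+1) + d' by omega, ih d d' (by omega)]
  | app b a ihb iha =>
    intro c' c d d' h
    simp only [shift]; rw [ihb d d' h, iha d d' h]
  | bot => intros; rfl
  | absurd b ih =>
    intro c' c d d' h
    simp only [shift]; rw [ih d d' h]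

theorem shift_merge : ∀ (t) {e k : ℕ} (d c), e ≤ k →
    shift d (e + c) (shift k c t) = shift (k + d) c t := by
  intro t
  induction t with
  | star => intros; rfl
  | var x =>
    intro e k d c h
    simp only [shift_var]
    split_ifs <;> (try simp only [shift_var]) <;> (try split_ifs) <;>
        (try simp only [shift_var]) <;> (try split_ifs) <;>
      first | rfl | omega | (exfalso; omega) | (congr 1; omega)
  | pi j A B ihA ihB =>
    intro e k d c h
    simp only [shift]
    rw [ihA d c h, show e + c + 1 = e + (c+1) by omega, ihB d (c+1) h]
  | lam b ih =>
    intro e k d c h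
    simp only [shift]
    rw [show e + c + 1 = e + (c+1) by omega, ih d (c+1) h]
  | app b a ihb iha =>
    intro e k d c h
    simp only [shift]; rw [ihb d c h, iha d c h]
  | bot => intros; rfl
  | absurd b ih =>
    intro e k d c h
    simp only [shift]; rw [ih d c h]

theorem subst_shift : ∀ (t) {e k : ℕ} (d u), e ≤ k →
    subst (k + d) u (shift d e t) = shift d e (subst k u t) := by
  intro t
  induction t with
  | star => intros; rfl
  | var x =>
    intro e k d u h
    rw [shift_var, subst_var]
    by_cases h1 : x < e
    · rw [if_pos h1, if_pos (by omega : x < k), subst_var (k+d) u x, if_pos (by omega),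
        shift_var d e x, if_pos h1]
    · rw [if_neg h1]
      by_cases h2 : x < k
      · rw [if_pos h2, subst_var (k+d) u (x+d), if_pos (by omega), shift_var d e x, if_neg h1]
      · by_cases h3 : x = k
        · rw [if_neg h2, if_pos h3, subst_var (k+d) u (x+d), if_neg (by omega),
            if_pos (by omega)]
          have := shift_merge u (e := e) d 0 h
          simpa using this.symm
        · rw [if_neg h2, if_neg h3, subst_var (k+d) u (x+d), if_neg (by omega),
            if_neg (by omega), shift_var d e (x-1), if_neg (by omega)]
          congr 1; omega
  | pi j A B ihA ihB =>
    intro e k d u h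
    simp only [shift, subst]
    rw [ihA d u h, show k + d + 1 = (k+1) + d by omega, ihB d u (by omega)]
  | lam b ih =>
    intro e k d u h
    simp only [shift, subst]
    rw [show k + d + 1 = (k+1) + d by omega, ih d u (by omega)]
  | app b a ihb iha =>
    intro e k d u h
    simp only [shift, subst]; rw [ihb d u h, iha d u h]
  | bot => intros; rfl
  | absurd b ih =>
    intro e k d u h
    simp only [shift, subst]; rw [ih d u h]

theorem subst_shift_cancel : ∀ (t) {e m c : ℕ} (u), e ≤ m → m ≤ c + e →
    subst m u (shift (c+1) e t) = shift c e t := by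
  intro t
  induction t with
  | star => intros; rfl
  | var x =>
    intro e m c u h1 h2
    simp only [shift_var]
    split_ifs <;> (try simp only [subst_var, shift_var]) <;> (try split_ifs) <;>
        (try simp only [shift_var]) <;> (try split_ifs) <;>
      first | rfl | omega | (exfalso; omega) | (congr 1; omega)
  | pi j A B ihA ihB =>
    intro e m c u h1 h2
    simp only [shift, subst]
    rw [ihA u h1 h2, ihB u (by omega) (by omega)]
  | lam b ih =>
    intro e m c u h1 h2
    simp only [shift, subst]; rw [ih u (by omega) (by omega)]
  | app b a ihb iha =>
    intro e m c u h1 h2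
    simp only [shift, subst]; rw [ihb u h1 h2, iha u h1 h2]
  | bot => intros; rfl
  | absurd b ih =>
    intro e m c u h1 h2
    simp only [shift, subst]; rw [ih u h1 h2]

theorem shift_subst : ∀ (b) {k c : ℕ} (d a),
    shift d (c + k) (subst k a b) = subst k (shift d c a) (shift d (c + k + 1) b) := by
  intro b
  induction b with
  | star => intros; rfl
  | var x =>
    intro k c d a
    rw [subst_var, shift_var]
    by_cases h1 : x < k
    · rw [if_pos h1, if_pos (by omega : x < c + k + 1), shift_var d (c+k) x,
        if_pos (by omega), subst_var k (shift d c a) x, if_pos h1]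
    · rw [if_neg h1]
      by_cases h2 : x = k
      · rw [if_pos h2, if_pos (by omega : x < c + k + 1), subst_var k (shift d c a) x,
          if_neg h1, if_pos h2]
        exact shift_shift a d k (by omega)
      · rw [if_neg h2]
        by_cases h3 : x < c + k + 1
        · rw [if_pos h3, shift_var d (c+k) (x-1), if_pos (by omega),
            subst_var k (shift d c a) x, if_neg h1, if_neg h2]
        · rw [if_neg h3, shift_var d (c+k) (x-1), if_neg (by omega),
            subst_var k (shift d c a) (x+d), if_neg (by omega), if_neg (by omega)]
          congr 1; omega
  | pi j A B ihA ihB =>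
    intro k c d a
    simp only [shift, subst]
    rw [ihA d a, show c + k + 1 = c + (k+1) by omega, ihB d a]
  | lam b ih =>
    intro k c d a
    simp only [shift, subst]
    rw [show c + k + 1 = c + (k+1) by omega, ih d a]
  | app b a' ihb iha =>
    intro k c d a
    simp only [shift, subst]; rw [ihb d a, iha d a]
  | bot => intros; rfl
  | absurd b ih =>
    intro k c d a
    simp only [shift, subst]; rw [ih d a]

theorem subst_subst : ∀ (b) {m k : ℕ} (u a),
    subst (k + m) u (subst m a b) = subst m (subst k u a) (subst (k + m + 1) u b) := by
  intro b
  induction b with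
  | star => intros; rfl
  | var x =>
    intro m k u a
    rw [subst_var, subst_var]
    by_cases h1 : x < m
    · rw [if_pos h1, if_pos (by omega : x < k + m + 1), subst_var (k+m) u x,
        if_pos (by omega), subst_var m (subst k u a) x, if_pos h1]
    · rw [if_neg h1]
      by_cases h2 : x = m
      · rw [if_pos h2, if_pos (by omega : x < k + m + 1), subst_var m (subst k u a) x,
          if_neg h1, if_pos h2]
        exact subst_shift a (e := 0) m u (by omega)
      · rw [if_neg h2]
        by_cases h3 : x < k + m + 1
        · rw [if_pos h3, subst_var (k+m) u (x-1), if_pos (by omega : x - 1 < k + m),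
            subst_var m (subst k u a) x, if_neg h1, if_neg h2]
        · by_cases h4 : x = k + m + 1
          · rw [if_neg h3, if_pos h4, subst_var (k+m) u (x-1),
              if_neg (by omega : ¬ x - 1 < k + m), if_pos (by omega : x - 1 = k + m)]
            exact (subst_shift_cancel u (e := 0) (m := m) (c := k + m) (subst k u a) (by omega) (by omega)).symm
          · rw [if_neg h3, if_neg h4, subst_var (k+m) u (x-1),
              if_neg (by omega : ¬ x - 1 < k + m), if_neg (by omega : ¬ x - 1 = k + m),
              subst_var m (subst k u a) (x-1), if_neg (by omega : ¬ x - 1 < m),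
              if_neg (by omega : ¬ x - 1 = m)]
  | pi j A B ihA ihB =>
    intro m k u a
    simp only [subst]
    rw [ihA u a, show k + m + 1 = k + (m+1) by omega, ihB u a]
  | lam b ih =>
    intro m k u a
    simp only [subst]
    rw [show k + m + 1 = k + (m+1) by omega, ih u a]
  | app b a' ihb iha =>
    intro m k u a
    simp only [subst]; rw [ihb u a, iha u a]
  | bot => intros; rfl
  | absurd b ih =>
    intro m k u a
    simp only [subst]; rw [ih u a]

end Tm
theorem parRefl : ∀ t, Par t t := by
  intro t
  induction t with
  | star => exact .star
  | var x => exact .var x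
  | pi j A B ihA ihB => exact .pi ihA ihB
  | lam b ih => exact .lam ih
  | app b a ihb iha => exact .app ihb iha
  | bot => exact .bot
  | absurd b ih => exact .absurd ih

theorem par_shift {a b : Tm} (h : Par a b) : ∀ d c, Par (Tm.shift d c a) (Tm.shift d c b) := by
  induction h with
  | star => intro d c; exact parRefl _
  | var x => intro d c; exact parRefl _
  | bot => intro d c; exact parRefl _
  | pi _ _ ihA ihB => intro d c; exact .pi (ihA d c) (ihB d (c+1))
  | lam _ ih => intro d c; exact .lam (ih d (c+1))
  | app _ _ ihb iha => intro d c; exact .app (ihb d c) (iha d c)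
  | @beta p p' q q' hp hq ihp ihq =>
    intro d c
    have h := Par.beta (ihp d (c+1)) (ihq d c)
    have e : Tm.shift d c (Tm.subst 0 q' p') =
        Tm.subst 0 (Tm.shift d c q') (Tm.shift d (c+1) p') :=
      Tm.shift_subst p' (k := 0) (c := c) d q'
    rw [show Tm.shift d c (Tm.app (Tm.lam p) q)
        = Tm.app (Tm.lam (Tm.shift d (c+1) p)) (Tm.shift d c q) from rfl, e]
    exact h
  | absurd _ ih => intro d c; exact .absurd (ih d c)

theorem par_subst {b b' : Tm} (h : Par b b') :
    ∀ (k : ℕ) {a a' : Tm}, Par a a' → Par (Tm.subst k a b) (Tm.subst k a' b') := by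
  induction h with
  | star => intro k a a' ha; exact parRefl _
  | var x =>
    intro k a a' ha
    rw [Tm.subst_var, Tm.subst_var]
    split_ifs with h1 h2
    · exact parRefl _
    · exact par_shift ha k 0
    · exact parRefl _
  | bot => intro k a a' ha; exact parRefl _
  | pi _ _ ihA ihB => intro k a a' ha; exact .pi (ihA k ha) (ihB (k+1) ha)
  | lam _ ih => intro k a a' ha; exact .lam (ih (k+1) ha)
  | app _ _ ihb iha => intro k a a' ha; exact .app (ihb k ha) (iha k ha)
  | @beta p p' q q' hp hq ihp ihq =>
    intro k a a' ha
    have h := Par.beta (ihp (k+1) ha) (ihq k ha)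
    have e : Tm.subst k a' (Tm.subst 0 q' p') =
        Tm.subst 0 (Tm.subst k a' q') (Tm.subst (k+1) a' p') :=
      Tm.subst_subst p' (m := 0) a' q'
    rw [show Tm.subst k a (Tm.app (Tm.lam p) q)
        = Tm.app (Tm.lam (Tm.subst (k+1) a p)) (Tm.subst k a q) from rfl, e]
    exact h
  | absurd _ ih => intro k a a' ha; exact .absurd (ih k ha)

theorem par_star_inv {t : Tm} (h : Par .star t) : t = .star := by cases h; rfl
theorem par_bot_inv {t : Tm} (h : Par .bot t) : t = .bot := by cases h; rfl
theorem par_lam_inv {b t : Tm} (h : Par (.lam b) t) : ∃ b', t = .lam b' ∧ Par b b' := by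
  cases h with
  | lam hb => exact ⟨_, rfl, hb⟩
theorem par_pi_inv {j} {A B t : Tm} (h : Par (.pi j A B) t) :
    ∃ A' B', t = .pi j A' B' ∧ Par A A' ∧ Par B B' := by
  cases h with
  | pi hA hB => exact ⟨_, _, rfl, hA, hB⟩

theorem par_diamond : ∀ {a b c : Tm}, Par a b → Par a c → ∃ d, Par b d ∧ Par c d := by
  intro a b c h1
  induction h1 generalizing c with
  | star => intro h2; cases h2; exact ⟨_, .star, .star⟩
  | var x => intro h2; cases h2; exact ⟨_, parRefl _, parRefl _⟩
  | bot => intro h2; cases h2; exact ⟨_, .bot, .bot⟩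
  | pi hA hB ihA ihB =>
    intro h2
    rcases par_pi_inv h2 with ⟨A₂, B₂, rfl, hA₂, hB₂⟩
    rcases ihA hA₂ with ⟨Ad, h3, h4⟩
    rcases ihB hB₂ with ⟨Bd, h5, h6⟩
    exact ⟨.pi _ Ad Bd, .pi h3 h5, .pi h4 h6⟩
  | lam hb ih =>
    intro h2
    rcases par_lam_inv h2 with ⟨b₂, rfl, hb₂⟩
    rcases ih hb₂ with ⟨bd, h3, h4⟩
    exact ⟨.lam bd, .lam h3, .lam h4⟩
  | app hb ha ihb iha =>
    intro h2
    cases h2 with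
    | app hb₂ ha₂ =>
      rcases ihb hb₂ with ⟨bd, h3, h4⟩
      rcases iha ha₂ with ⟨ad, h5, h6⟩
      exact ⟨.app bd ad, .app h3 h5, .app h4 h6⟩
    | beta hp₂ ha₂ =>
      -- first: app (lam p) q ⇒ app b' a' with hb : Par (lam p) b'
      rcases par_lam_inv (by assumption : Par (Tm.lam _) _) with ⟨p₁, rfl, hp₁⟩
      rcases ihb (Par.lam hp₂) with ⟨e, h3, h4⟩
      rcases par_lam_inv h3 with ⟨pe, rfl, hpe⟩
      rcases par_lam_inv h4 with ⟨pe', heq, hpe'⟩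
      injection heq with heq'
      subst heq'
      rcases iha ha₂ with ⟨ad, h5, h6⟩
      exact ⟨Tm.subst 0 ad pe, .beta hpe h5, par_subst hpe' 0 h6⟩
  | beta hp ha ihp iha =>
    intro h2
    cases h2 with
    | app hb₂ ha₂ =>
      rcases par_lam_inv hb₂ with ⟨p₂, rfl, hp₂⟩
      rcases ihp hp₂ with ⟨pd, h3, h4⟩
      rcases iha ha₂ with ⟨ad, h5, h6⟩
      exact ⟨Tm.subst 0 ad pd, par_subst h3 0 h5, .beta h4 h6⟩
    | beta hp₂ ha₂ =>
      rcases ihp hp₂ with ⟨pd, h3, h4⟩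
      rcases iha ha₂ with ⟨ad, h5, h6⟩
      exact ⟨Tm.subst 0 ad pd, par_subst h3 0 h5, par_subst h4 0 h6⟩
  | absurd hb ih =>
    intro h2
    cases h2 with
    | absurd hb₂ =>
      rcases ih hb₂ with ⟨bd, h3, h4⟩
      exact ⟨.absurd bd, .absurd h3, .absurd h4⟩

theorem pars_strip {a b c : Tm} (h1 : Par a b) (h2 : Pars a c) :
    ∃ d, Pars b d ∧ Par c d := by
  induction h2 with
  | refl => exact ⟨b, Relation.ReflTransGen.refl, h1⟩
  | tail _ r ih =>
    rcases ih with ⟨d₁, hd₁, hr₁⟩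
    rcases par_diamond r hr₁ with ⟨e, he₁, he₂⟩
    exact ⟨e, hd₁.tail he₂, he₁⟩

theorem pars_diamond {a b c : Tm} (h1 : Pars a b) (h2 : Pars a c) :
    ∃ d, Pars b d ∧ Pars c d := by
  induction h1 with
  | refl => exact ⟨c, h2, Relation.ReflTransGen.refl⟩
  | tail _ r ih =>
    rcases ih with ⟨d₁, hd₁, hc₁⟩
    rcases pars_strip r hd₁ with ⟨e, he₁, he₂⟩
    exact ⟨e, he₁, hc₁.tail he₂⟩

theorem pars_pi {j} {A A' B B' : Tm} (hA : Pars A A') (hB : Pars B B') :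
    Pars (.pi j A B) (.pi j A' B') := by
  have h1 : Pars (Tm.pi j A B) (.pi j A' B) :=
    Relation.ReflTransGen.lift (fun X => Tm.pi j X B) (fun _ _ r => Par.pi r (parRefl _)) _ _ hA
  have h2 : Pars (Tm.pi j A' B) (.pi j A' B') :=
    Relation.ReflTransGen.lift (fun X => Tm.pi j A' X) (fun _ _ r => Par.pi (parRefl _) r) _ _ hB
  exact h1.trans h2

theorem pars_lam {b b' : Tm} (hb : Pars b b') : Pars (.lam b) (.lam b') :=
  Relation.ReflTransGen.lift Tm.lam (fun _ _ r => Par.lam r) _ _ hb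

theorem pars_app {b b' a a' : Tm} (hb : Pars b b') (ha : Pars a a') :
    Pars (.app b a) (.app b' a') := by
  have h1 : Pars (Tm.app b a) (.app b' a) :=
    Relation.ReflTransGen.lift (fun X => Tm.app X a) (fun _ _ r => Par.app r (parRefl _)) _ _ hb
  have h2 : Pars (Tm.app b' a) (.app b' a') :=
    Relation.ReflTransGen.lift (fun X => Tm.app b' X) (fun _ _ r => Par.app (parRefl _) r) _ _ ha
  exact h1.trans h2

theorem pars_absurd {b b' : Tm} (hb : Pars b b') : Pars (.absurd b) (.absurd b') :=
  Relation.ReflTransGen.lift Tm.absurd (fun _ _ r => Par.absurd r) _ _ hb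

theorem pars_subst0 {B B' : Tm} (a : Tm) (hB : Pars B B') :
    Pars (Tm.subst 0 a B) (Tm.subst 0 a B') :=
  Relation.ReflTransGen.lift (fun X => Tm.subst 0 a X) (fun _ _ r => par_subst r 0 (parRefl a)) _ _ hB

theorem pars_star_inv : ∀ {t : Tm}, Pars .star t → t = .star := by
  intro t h
  induction h with
  | refl => rfl
  | tail _ r ih => subst ih; exact par_star_inv r

theorem pars_bot_inv : ∀ {t : Tm}, Pars .bot t → t = .bot := by
  intro t h
  induction h with
  | refl => rfl
  | tail _ r ih => subst ih; exact par_bot_inv r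

theorem pars_pi_inv : ∀ {j} {A B t : Tm}, Pars (.pi j A B) t →
    ∃ A' B', t = .pi j A' B' ∧ Pars A A' ∧ Pars B B' := by
  intro j A B t h
  induction h with
  | refl => exact ⟨A, B, rfl, .refl, .refl⟩
  | tail _ r ih =>
    rcases ih with ⟨A', B', rfl, hA, hB⟩
    rcases par_pi_inv r with ⟨A'', B'', rfl, hA', hB'⟩
    exact ⟨A'', B'', rfl, hA.tail hA', hB.tail hB'⟩

theorem conv_refl (a : Tm) : Conv a a := ⟨a, .refl, .refl⟩
theorem conv_sym {a b : Tm} (h : Conv a b) : Conv b a := by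
  rcases h with ⟨c, h1, h2⟩; exact ⟨c, h2, h1⟩
theorem conv_trans {a b c : Tm} (h1 : Conv a b) (h2 : Conv b c) : Conv a c := by
  rcases h1 with ⟨d, hd1, hd2⟩
  rcases h2 with ⟨e, he1, he2⟩
  rcases pars_diamond hd2 he1 with ⟨f, hf1, hf2⟩
  exact ⟨f, hd1.trans hf1, he2.trans hf2⟩

theorem pars_conv {a b : Tm} (h : Pars a b) : Conv a b := ⟨b, h, .refl⟩

theorem deq_conv {a b : Tm} (h : DEq a b) : Conv a b := by
  induction h with
  | refl a => exact conv_refl a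
  | sym _ ih => exact conv_sym ih
  | trans _ _ ih1 ih2 => exact conv_trans ih1 ih2
  | beta b a => exact pars_conv (Relation.ReflTransGen.single (Par.beta (parRefl _) (parRefl _)))
  | pi _ _ ihA ihB =>
    rcases ihA with ⟨A₀, hA1, hA2⟩
    rcases ihB with ⟨B₀, hB1, hB2⟩
    exact ⟨_, pars_pi hA1 hB1, pars_pi hA2 hB2⟩
  | lam _ ih =>
    rcases ih with ⟨b₀, h1, h2⟩
    exact ⟨_, pars_lam h1, pars_lam h2⟩
  | app _ _ ihb iha =>
    rcases ihb with ⟨b₀, h1, h2⟩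
    rcases iha with ⟨a₀, h3, h4⟩
    exact ⟨_, pars_app h1 h3, pars_app h2 h4⟩
  | absurd _ ih =>
    rcases ih with ⟨b₀, h1, h2⟩
    exact ⟨_, pars_absurd h1, pars_absurd h2⟩
namespace Tm

def consEnv (a : Tm) (ρ : ℕ → Tm) : ℕ → Tm
  | 0 => a
  | x+1 => ρ x

/-- Instantiate all de Bruijn indices `≥ n` by the (closed) terms of `ρ`. -/
def inst (ρ : ℕ → Tm) : ℕ → Tm → Tm
  | _, star => star
  | n, var x => if x < n then var x else ρ (x - n)
  | n, pi j A B => pi j (inst ρ n A) (inst ρ (n+1) B)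
  | n, lam b => lam (inst ρ (n+1) b)
  | n, app b a => app (inst ρ n b) (inst ρ n a)
  | _, bot => bot
  | n, absurd b => absurd (inst ρ n b)

def ClosedEnv (ρ : ℕ → Tm) : Prop := ∀ x, Closed (ρ x)

theorem inst_var (ρ : ℕ → Tm) (n x : ℕ) :
    inst ρ n (var x) = if x < n then var x else ρ (x - n) := rfl

theorem closedEnv_cons {ρ : ℕ → Tm} (hρ : ClosedEnv ρ) {a : Tm} (ha : Closed a) :
    ClosedEnv (consEnv a ρ) := by
  intro x; cases x with
  | zero => exact ha
  | succ x => exact hρ x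

theorem inst_closedAbove {ρ : ℕ → Tm} (hρ : ClosedEnv ρ) :
    ∀ (t : Tm) (n : ℕ), ClosedAbove n (inst ρ n t) := by
  intro t
  induction t with
  | star => intro n; trivial
  | var x =>
    intro n
    rw [inst_var]
    split_ifs with h
    · exact h
    · exact closedAbove_mono _ (hρ (x - n)) (by omega)
  | pi j A B ihA ihB => intro n; exact ⟨ihA n, ihB (n+1)⟩
  | lam b ih => intro n; exact ih (n+1)
  | app b a ihb iha => intro n; exact ⟨ihb n, iha n⟩
  | bot => intro n; trivial
  | absurd b ih => intro n; exact ih n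

theorem subst_inst {ρ : ℕ → Tm} (hρ : ClosedEnv ρ) {a : Tm} (ha : Closed a) :
    ∀ (b : Tm) (n : ℕ), subst n a (inst ρ (n+1) b) = inst (consEnv a ρ) n b := by
  intro b
  induction b with
  | star => intro n; rfl
  | var x =>
    intro n
    rw [inst_var, inst_var]
    by_cases h1 : x < n
    · rw [if_pos (by omega), if_pos h1, subst_var, if_pos h1]
    · rw [if_neg h1]
      by_cases h2 : x = n
      · rw [if_pos (by omega), subst_var, if_neg h1, if_pos h2,
          shift_closed a n ha (by omega)]
        have : x - n = 0 := by omega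
        rw [this]; rfl
      · rw [if_neg (by omega)]
        rw [subst_closed _ a (hρ (x - (n+1))) (by omega)]
        have : x - n = (x - (n+1)) + 1 := by omega
        rw [this]; rfl
  | pi j A B ihA ihB =>
    intro n
    simp only [inst, subst]
    rw [ihA n, ihB (n+1)]
  | lam b ih =>
    intro n
    simp only [inst, subst]
    rw [ih (n+1)]
  | app b a' ihb iha =>
    intro n
    simp only [inst, subst]
    rw [ihb n, iha n]
  | bot => intro n; rfl
  | absurd b ih =>
    intro n
    simp only [inst, subst]
    rw [ih n]

theorem inst_shift {ρ : ℕ → Tm} (hρ : ClosedEnv ρ) :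
    ∀ (t : Tm) (e m p : ℕ), e ≤ p →
      inst ρ (p + m) (shift m e t) = shift m e (inst ρ p t) := by
  intro t
  induction t with
  | star => intros; rfl
  | var x =>
    intro e m p h
    rw [shift_var, inst_var]
    by_cases h1 : x < e
    · rw [if_pos h1, if_pos (by omega : x < p), inst_var, if_pos (by omega : x < p + m),
        shift_var, if_pos h1]
    · rw [if_neg h1]
      by_cases h2 : x < p
      · rw [if_pos h2, inst_var, if_pos (by omega : x + m < p + m), shift_var, if_neg h1]
      · rw [if_neg h2, inst_var, if_neg (by omega : ¬ x + m < p + m),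
          shift_closed _ m (hρ (x - p)) (by omega)]
        congr 1
        omega
  | pi j A B ihA ihB =>
    intro e m p h
    simp only [inst, shift]
    rw [ihA e m p h, show p + m + 1 = (p+1) + m by omega, ihB (e+1) m (p+1) (by omega)]
  | lam b ih =>
    intro e m p h
    simp only [inst, shift]
    rw [show p + m + 1 = (p+1) + m by omega, ih (e+1) m (p+1) (by omega)]
  | app b a ihb iha =>
    intro e m p h
    simp only [inst, shift]
    rw [ihb e m p h, iha e m p h]
  | bot => intros; rfl
  | absurd b ih =>
    intro e m p h
    simp only [inst, shift]
    rw [ih e m p h]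

theorem inst_subst {ρ : ℕ → Tm} (hρ : ClosedEnv ρ) :
    ∀ (b : Tm) (m p : ℕ) (a : Tm),
      inst ρ (p + m) (subst m a b) = subst m (inst ρ p a) (inst ρ (p + m + 1) b) := by
  intro b
  induction b with
  | star => intros; rfl
  | var x =>
    intro m p a
    rw [subst_var, inst_var]
    by_cases h1 : x < m
    · rw [if_pos h1, if_pos (by omega : x < p + m + 1), inst_var,
        if_pos (by omega : x < p + m), subst_var, if_pos h1]
    · rw [if_neg h1]
      by_cases h2 : x = m
      · rw [if_pos h2, if_pos (by omega : x < p + m + 1)]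
        have e5 := inst_shift hρ a 0 m p (by omega)
        rw [e5, subst_var, if_neg h1, if_pos h2]
      · rw [if_neg h2]
        by_cases h3 : x < p + m + 1
        · rw [if_pos h3, inst_var, if_pos (by omega : x - 1 < p + m), subst_var,
            if_neg h1, if_neg h2]
        · rw [if_neg h3, inst_var, if_neg (by omega : ¬ x - 1 < p + m),
            subst_closed _ (inst ρ p a) (hρ (x - (p + m + 1))) (by omega)]
          congr 1
          omega
  | pi j A B ihA ihB =>
    intro m p a
    simp only [inst, subst]
    rw [ihA m p a, show p + m + 1 = p + (m+1) by omega, ihB (m+1) p a]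
  | lam b ih =>
    intro m p a
    simp only [inst, subst]
    rw [show p + m + 1 = p + (m+1) by omega, ih (m+1) p a]
  | app b a' ihb iha =>
    intro m p a
    simp only [inst, subst]
    rw [ihb m p a, iha m p a]
  | bot => intros; rfl
  | absurd b ih =>
    intro m p a
    simp only [inst, subst]
    rw [ih m p a]

theorem inst_cons_shift {ρ : ℕ → Tm} (a : Tm) :
    ∀ (t : Tm) (n : ℕ), inst (consEnv a ρ) n (shift 1 n t) = inst ρ n t := by
  intro t
  induction t with
  | star => intros; rfl
  | var x =>
    intro n
    rw [shift_var, inst_var]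
    by_cases h1 : x < n
    · rw [if_pos h1, if_pos h1, inst_var, if_pos h1]
    · rw [if_neg h1, if_neg h1, inst_var, if_neg (by omega : ¬ x + 1 < n)]
      have : x + 1 - n = (x - n) + 1 := by omega
      rw [this]
      rfl
  | pi j A B ihA ihB =>
    intro n
    simp only [inst, shift]
    rw [ihA n, ihB (n+1)]
  | lam b ih =>
    intro n
    simp only [inst, shift]
    rw [ih (n+1)]
  | app b a' ihb iha =>
    intro n
    simp only [inst, shift]
    rw [ihb n, iha n]
  | bot => intros; rfl
  | absurd b ih =>
    intro n
    simp only [inst, shift]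
    rw [ih n]

end Tm

theorem par_inst {ρ : ℕ → Tm} (hρ : Tm.ClosedEnv ρ) {a b : Tm} (h : Par a b) :
    ∀ n, Par (Tm.inst ρ n a) (Tm.inst ρ n b) := by
  induction h with
  | star => intro n; exact parRefl _
  | var x => intro n; exact parRefl _
  | bot => intro n; exact parRefl _
  | pi _ _ ihA ihB => intro n; exact .pi (ihA n) (ihB (n+1))
  | lam _ ih => intro n; exact .lam (ih (n+1))
  | app _ _ ihb iha => intro n; exact .app (ihb n) (iha n)
  | @beta p p' q q' hp hq ihp ihq =>
    intro n
    have h := Par.beta (ihp (n+1)) (ihq n)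
    have e : Tm.inst ρ n (Tm.subst 0 q' p') =
        Tm.subst 0 (Tm.inst ρ n q') (Tm.inst ρ (n+1) p') := by
      have := Tm.inst_subst hρ p' 0 n q'
      simpa using this
    rw [show Tm.inst ρ n (Tm.app (Tm.lam p) q)
        = Tm.app (Tm.lam (Tm.inst ρ (n+1) p)) (Tm.inst ρ n q) from rfl, e]
    exact h
  | absurd _ ih => intro n; exact .absurd (ih n)

theorem pars_inst {ρ : ℕ → Tm} (hρ : Tm.ClosedEnv ρ) {a b : Tm} (h : Pars a b) (n : ℕ) :
    Pars (Tm.inst ρ n a) (Tm.inst ρ n b) :=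
  Relation.ReflTransGen.lift (Tm.inst ρ n) (fun _ _ r => par_inst hρ r n) _ _ h

theorem conv_inst {ρ : ℕ → Tm} (hρ : Tm.ClosedEnv ρ) {a b : Tm} (h : Conv a b) (n : ℕ) :
    Conv (Tm.inst ρ n a) (Tm.inst ρ n b) := by
  rcases h with ⟨c, h1, h2⟩
  exact ⟨_, pars_inst hρ h1 n, pars_inst hρ h2 n⟩
/-! ### The logical relation, by induction–recursion encoded via a level tower -/

/-- Codes for semantic types at level `k`, given the interpretations of
levels below `k` (`lu j A`: `A` is a semantic type at level `j`;
`lm j A t`: `t` is a member of `A` at level `j`). -/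
inductive Ui (k : ℕ) (lu : ℕ → Tm → Prop) (lm : ℕ → Tm → Tm → Prop) : Tm → Type
  | star : Ui k lu lm .star
  | bot : Ui k lu lm .bot
  | pi (j : ℕ) (A B : Tm) (hj : j < k) (hA : lu j A)
      (uB : ∀ a, Tm.Closed a → lm j A a → Ui k lu lm (Tm.subst 0 a B)) :
      Ui k lu lm (.pi j A B)
  | step (A A' : Tm) (r : Par A A') (u : Ui k lu lm A') : Ui k lu lm A

/-- Membership in a semantic type (the "elements" function of the
induction–recursion). -/
def eli {k lu lm} : {A : Tm} → Ui k lu lm A → Tm → Prop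
  | _, .star => fun t => Nonempty (Ui k lu lm t)
  | _, .bot => fun _ => False
  | _, .pi j A _ _ _ uB => fun f => ∀ a (ca : Tm.Closed a) (ha : lm j A a),
      eli (uB a ca ha) (.app f a)
  | _, .step _ _ _ u => eli u

/-- The tower of lower-level interpretations. -/
def low (k : ℕ) : (ℕ → Tm → Prop) × (ℕ → Tm → Tm → Prop) :=
  (fun j A => if _h : j < k then Nonempty (Ui j (low j).1 (low j).2 A) else False,
   fun j A t => if _h : j < k then ∃ u : Ui j (low j).1 (low j).2 A, eli u t else False)
termination_by k

/-- Semantic types at level `k`. -/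
abbrev U (k : ℕ) (A : Tm) : Type := Ui k (low k).1 (low k).2 A

/-- Elements of a semantic type. -/
abbrev el {k : ℕ} {A : Tm} (u : U k A) : Tm → Prop := eli u

/-- `t` inhabits `A` at level `k`. -/
def Mem (k : ℕ) (A t : Tm) : Prop := ∃ u : U k A, el u t

theorem low1_iff {k j : ℕ} {A : Tm} : (low k).1 j A ↔ (j < k ∧ Nonempty (U j A)) := by
  conv_lhs => rw [low]
  dsimp only
  split_ifs with h
  · simp [h, U]
  · simp [h]

theorem low2_iff {k j : ℕ} {A t : Tm} : (low k).2 j A t ↔ (j < k ∧ Mem j A t) := by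
  conv_lhs => rw [low]
  dsimp only
  split_ifs with h
  · simp [h, Mem, U, el]
  · simp [h]

theorem el_star_eq {k : ℕ} (t : Tm) : el (k := k) Ui.star t = Nonempty (U k t) := rfl
theorem el_bot_eq {k : ℕ} (t : Tm) : el (k := k) Ui.bot t = False := rfl
theorem el_pi_eq {k j : ℕ} {A B : Tm} (hj : j < k) (hA : (low k).1 j A)
    (uB : ∀ a, Tm.Closed a → (low k).2 j A a → U k (Tm.subst 0 a B)) (f : Tm) :
    el (Ui.pi j A B hj hA uB) f
      = ∀ a (ca : Tm.Closed a) (ha : (low k).2 j A a), el (uB a ca ha) (.app f a) := rfl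
theorem el_step_eq {k : ℕ} {A A' : Tm} (r : Par A A') (u : U k A') (t : Tm) :
    el (Ui.step A A' r u) t = el u t := rfl

/-- Forward closure of the logical relation under parallel reduction,
preserving the membership predicate. -/
theorem fwd : ∀ (k : ℕ) {A : Tm} (u : U k A) {A' : Tm}, Par A A' →
    ∃ u' : U k A', ∀ t, el u' t ↔ el u t := by
  intro k
  induction k using Nat.strong_induction_on with
  | _ k ihk =>
    intro A u
    induction u with
    | star =>
      intro A' r
      have h := par_star_inv r; subst h
      exact ⟨Ui.star, fun t => Iff.rfl⟩
    | bot =>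
      intro A' r
      have h := par_bot_inv r; subst h
      exact ⟨Ui.bot, fun t => Iff.rfl⟩
    | pi j₀ A₀ B₀ hj hA uB ih =>
      intro A' r
      cases r with
      | @pi _ _ A₀' _ B₀' rA rB =>
        have hA0 : Nonempty (U j₀ A₀) := (low1_iff.mp hA).2
        have hA' : (low k).1 j₀ A₀' := by
          refine low1_iff.mpr ⟨hj, ?_⟩
          rcases hA0 with ⟨u₀⟩
          rcases ihk j₀ hj u₀ rA with ⟨u₁, _⟩
          exact ⟨u₁⟩
        have lmback : ∀ a, (low k).2 j₀ A₀' a → (low k).2 j₀ A₀ a := by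
          intro a ha'
          rcases low2_iff.mp ha' with ⟨h1, u', hel⟩
          exact low2_iff.mpr ⟨h1, Ui.step _ _ rA u', hel⟩
        have lmfwd : ∀ a, (low k).2 j₀ A₀ a → (low k).2 j₀ A₀' a := by
          intro a ha
          rcases low2_iff.mp ha with ⟨h1, u', hel⟩
          rcases ihk j₀ hj u' rA with ⟨u'', hiff⟩
          exact low2_iff.mpr ⟨h1, u'', (hiff a).mpr hel⟩
        choose uB' hB' using fun a ca (ha' : (low k).2 j₀ A₀' a) =>
          ih a ca (lmback a ha') (par_subst rB 0 (parRefl a))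
        refine ⟨Ui.pi j₀ A₀' B₀' hj hA' uB', fun f => ?_⟩
        rw [el_pi_eq, el_pi_eq]
        constructor
        · intro h a ca ha
          have ha' := lmfwd a ha
          have := (hB' a ca ha' (.app f a)).mp (h a ca ha')
          exact this
        · intro h a ca ha'
          exact (hB' a ca ha' (.app f a)).mpr (h a ca (lmback a ha'))
    | step A A₁ r₀ u₀ ih =>
      intro A' r
      rcases par_diamond r₀ r with ⟨D, h1, h2⟩
      rcases ih h1 with ⟨uD, hiff⟩
      exact ⟨Ui.step A' D h2 uD, fun t => hiff t⟩

theorem fwds (k : ℕ) {A A' : Tm} (h : Pars A A') (u : U k A) :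
    ∃ u' : U k A', ∀ t, el u' t ↔ el u t := by
  induction h with
  | refl => exact ⟨u, fun t => Iff.rfl⟩
  | tail _ r ih =>
    rcases ih with ⟨u₁, h₁⟩
    rcases fwd k u₁ r with ⟨u₂, h₂⟩
    exact ⟨u₂, fun t => (h₂ t).trans (h₁ t)⟩

theorem mem_fwds {k : ℕ} {A A' t : Tm} (h : Pars A A') : Mem k A t → Mem k A' t := by
  rintro ⟨u, hu⟩
  rcases fwds k h u with ⟨u', h'⟩
  exact ⟨u', (h' t).mpr hu⟩

theorem mem_bwd {k : ℕ} {A A' t : Tm} (r : Par A A') : Mem k A' t → Mem k A t := by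
  rintro ⟨u, hu⟩
  exact ⟨Ui.step _ _ r u, hu⟩

theorem mem_bwds {k : ℕ} {A A' t : Tm} (h : Pars A A') : Mem k A' t → Mem k A t := by
  induction h with
  | refl => exact id
  | tail _ r ih => exact fun h' => ih (mem_bwd r h')

/-- Inversion: any code for a term reducing to `⋆` has the universe as els. -/
theorem el_star_inv : ∀ {k : ℕ} {T : Tm} (u : U k T), Pars T .star →
    ∀ t, el u t ↔ Nonempty (U k t) := by
  intro k T u
  induction u with
  | star => intro _ t; exact Iff.rfl
  | bot =>
    intro h
    exact absurd (pars_bot_inv h) (by simp)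
  | pi j₀ A₀ B₀ hj hA uB ih =>
    intro h
    rcases pars_pi_inv h with ⟨A', B', heq, -, -⟩
    exact absurd heq (by simp)
  | step A A₁ r u₀ ih =>
    intro h t
    rcases pars_strip r h with ⟨d, hd, hstar⟩
    have := par_star_inv hstar; subst this
    exact ih hd t

theorem el_bot_inv : ∀ {k : ℕ} {T : Tm} (u : U k T), Pars T .bot →
    ∀ t, el u t ↔ False := by
  intro k T u
  induction u with
  | star =>
    intro h
    exact absurd (pars_star_inv h) (by simp)
  | bot => intro _ t; exact Iff.rfl
  | pi j₀ A₀ B₀ hj hA uB ih =>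
    intro h
    rcases pars_pi_inv h with ⟨A', B', heq, -, -⟩
    exact absurd heq (by simp)
  | step A A₁ r u₀ ih =>
    intro h t
    rcases pars_strip r h with ⟨d, hd, hbot⟩
    have := par_bot_inv hbot; subst this
    exact ih hd t

/-- Inversion for function types. -/
theorem el_pi_inv : ∀ {k : ℕ} {T : Tm} (u : U k T) {j : ℕ} {A B : Tm}, Pars T (.pi j A B) →
    ∃ (hj : j < k) (hA : (low k).1 j A)
      (uB : ∀ a, Tm.Closed a → (low k).2 j A a → U k (Tm.subst 0 a B)),
      ∀ f, el u f ↔ ∀ a ca ha, el (uB a ca ha) (.app f a) := by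
  intro k T u
  induction u with
  | star =>
    intro j A B h
    exact absurd (pars_star_inv h) (by simp)
  | bot =>
    intro j A B h
    exact absurd (pars_bot_inv h) (by simp)
  | pi j₀ A₀ B₀ hj hA uB ih =>
    intro j A B h
    rcases pars_pi_inv h with ⟨A₁, B₁, heq, hA₁, hB₁⟩
    obtain ⟨rfl, rfl, rfl⟩ : j = j₀ ∧ A = A₁ ∧ B = B₁ := by
      refine ⟨?_, ?_, ?_⟩ <;> injection heq <;> simp_all
    -- now : Pars A₀ A, Pars B₀ B  (named hA₁ hB₁)
    have hA' : (low k).1 j A := by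
      rcases low1_iff.mp hA with ⟨h1, ⟨u₀⟩⟩
      rcases fwds j hA₁ u₀ with ⟨u₁, -⟩
      exact low1_iff.mpr ⟨h1, ⟨u₁⟩⟩
    have lmback : ∀ a, (low k).2 j A a → (low k).2 j A₀ a := by
      intro a ha
      rcases low2_iff.mp ha with ⟨h1, hm⟩
      exact low2_iff.mpr ⟨h1, mem_bwds hA₁ hm⟩
    have lmfwd : ∀ a, (low k).2 j A₀ a → (low k).2 j A a := by
      intro a ha
      rcases low2_iff.mp ha with ⟨h1, hm⟩
      exact low2_iff.mpr ⟨h1, mem_fwds hA₁ hm⟩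
    choose uB' hB' using fun a ca (ha : (low k).2 j A a) =>
      fwds k (pars_subst0 a hB₁) (uB a ca (lmback a ha))
    refine ⟨hj, hA', uB', fun f => ?_⟩
    rw [el_pi_eq]
    constructor
    · intro h a ca ha
      exact (hB' a ca ha (.app f a)).mpr (h a ca (lmback a ha))
    · intro h a ca ha
      have ha' := lmfwd a ha
      exact (hB' a ca ha' (.app f a)).mp (h a ca ha')
  | step A A₁ r u₀ ih =>
    intro j A' B' h
    rcases pars_strip r h with ⟨d, hd, hpi⟩
    rcases par_pi_inv hpi with ⟨A₂, B₂, rfl, rA, rB⟩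
    rcases ih hd with ⟨hj, hA₂, uB₂, hiff⟩
    have hA' : (low k).1 j A' := by
      rcases low1_iff.mp hA₂ with ⟨h1, ⟨u₂⟩⟩
      exact low1_iff.mpr ⟨h1, ⟨Ui.step _ _ rA u₂⟩⟩
    have lmfwd : ∀ a, (low k).2 j A' a → (low k).2 j A₂ a := by
      intro a ha
      rcases low2_iff.mp ha with ⟨h1, ⟨u, hu⟩⟩
      rcases fwd j u rA with ⟨u', hiff'⟩
      exact low2_iff.mpr ⟨h1, u', (hiff' a).mpr hu⟩
    refine ⟨hj, hA', fun a ca ha =>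
      Ui.step _ _ (par_subst rB 0 (parRefl a)) (uB₂ a ca (lmfwd a ha)), fun f => ?_⟩
    rw [el_step_eq]
    rw [hiff f]
    constructor
    · intro h a ca ha
      exact h a ca (lmfwd a ha)
    · intro h a ca ha₂
      have ha := low2_iff.mpr ⟨(low2_iff.mp ha₂).1, mem_bwd rA (low2_iff.mp ha₂).2⟩
      have := h a ca ha
      rw [el_step_eq] at this
      exact this
/-- Cumulativity: codes lift to higher levels. -/
theorem lift : ∀ {k k' : ℕ}, k ≤ k' → ∀ {A : Tm}, U k A → Nonempty (U k' A) := by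
  intro k k' hkk A u
  induction u with
  | star => exact ⟨Ui.star⟩
  | bot => exact ⟨Ui.bot⟩
  | pi j₀ A₀ B₀ hj hA uB ih =>
    have hA' : (low k').1 j₀ A₀ := by
      rcases low1_iff.mp hA with ⟨h1, h2⟩
      exact low1_iff.mpr ⟨by omega, h2⟩
    refine ⟨Ui.pi j₀ A₀ B₀ (by omega) hA' fun a ca ha' => ?_⟩
    have ha : (low k).2 j₀ A₀ a := by
      rcases low2_iff.mp ha' with ⟨h1, h2⟩
      exact low2_iff.mpr ⟨hj, h2⟩
    exact Classical.choice (ih a ca ha)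
  | step A A₁ r u₀ ih =>
    exact ⟨Ui.step _ _ r (Classical.choice ih)⟩

/-- Membership is monotone in the level, and unambiguous at each level:
any element of a lower-level code is an element of any higher-level code
for the same type. -/
theorem el_mono : ∀ {k j : ℕ}, j ≤ k → ∀ {A : Tm} (u : U j A) (v : U k A) (t : Tm),
    el u t → el v t := by
  intro k j hjk A u
  induction u with
  | star =>
    intro v t h
    refine (el_star_inv v .refl t).mpr ?_
    rcases h with ⟨u₀⟩
    exact lift hjk u₀
  | bot =>
    intro v t h
    exact h.elim
  | pi j₀ A₀ B₀ hj hA uB ih =>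
    intro v t h
    rcases el_pi_inv v .refl with ⟨hj', hA', uB', hiff⟩
    refine (hiff t).mpr ?_
    intro a ca ha'
    have ha : (low j).2 j₀ A₀ a := low2_iff.mpr ⟨hj, (low2_iff.mp ha').2⟩
    exact ih a ca ha (uB' a ca ha') (.app t a) (h a ca ha)
  | step A A₁ r u₀ ih =>
    intro v t h
    rcases fwd k v r with ⟨v', hv'⟩
    exact (hv' t).mp (ih v' t h)

theorem mem_mono {j k : ℕ} (h : j ≤ k) {A t : Tm} : Mem j A t → Mem k A t := by
  rintro ⟨u, hu⟩
  rcases lift h u with ⟨v⟩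
  exact ⟨v, el_mono h u v t hu⟩

/-- Convertible types have the same members (up to levels). -/
theorem el_conv {j k : ℕ} (hjk : j ≤ k) {A B : Tm} (hc : Conv A B)
    (u : U j A) (v : U k B) (t : Tm) (h : el u t) : el v t := by
  rcases hc with ⟨C, h1, h2⟩
  rcases fwds j h1 u with ⟨uC, hu⟩
  rcases fwds k h2 v with ⟨vC, hv⟩
  exact (hv t).mp (el_mono hjk uC vC t ((hu t).mpr h))

/-- Members are closed under parallel expansion. -/
theorem el_bwd : ∀ {k : ℕ} {A : Tm} (u : U k A) {t t' : Tm}, Par t t' → el u t' → el u t := by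
  intro k A u
  induction u with
  | star =>
    intro t t' r h
    rcases h with ⟨u₀⟩
    exact ⟨Ui.step _ _ r u₀⟩
  | bot => intro t t' r h; exact h.elim
  | pi j₀ A₀ B₀ hj hA uB ih =>
    intro t t' r h a ca ha
    exact ih a ca ha (Par.app r (parRefl a)) (h a ca ha)
  | step A A₁ r₀ u₀ ih =>
    intro t t' r h
    exact ih r h

/-! ### The fundamental theorem -/

def EnvOK (ρ : ℕ → Tm) (Γ : Ctx) : Prop :=
  Tm.ClosedEnv ρ ∧
    ∀ x j A, Γ[x]? = some (j, A) → Mem j (Tm.inst ρ 0 (Tm.shift (x+1) 0 A)) (ρ x)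

theorem envOK_cons {ρ : ℕ → Tm} {Γ : Ctx} {j : ℕ} {A a : Tm}
    (h : EnvOK ρ Γ) (ca : Tm.Closed a) (ha : Mem j (Tm.inst ρ 0 A) a) :
    EnvOK (Tm.consEnv a ρ) ((j, A) :: Γ) := by
  refine ⟨Tm.closedEnv_cons h.1 ca, ?_⟩
  intro x j' A' hx
  cases x with
  | zero =>
    have hx' : some (j, A) = some (j', A') := hx
    obtain ⟨rfl, rfl⟩ : j = j' ∧ A = A' := by
      injection hx' with h'
      exact ⟨congrArg Prod.fst h', congrArg Prod.snd h'⟩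
    show Mem j (Tm.inst (Tm.consEnv a ρ) 0 (Tm.shift 1 0 A)) a
    rw [Tm.inst_cons_shift a A 0]
    exact ha
  | succ x =>
    have hx' : Γ[x]? = some (j', A') := hx
    have hmem := h.2 x j' A' hx'
    show Mem j' (Tm.inst (Tm.consEnv a ρ) 0 (Tm.shift (x+2) 0 A')) (ρ x)
    rw [show Tm.shift (x+2) 0 A' = Tm.shift 1 0 (Tm.shift (x+1) 0 A') from
      (Tm.shift_merge A' (e := 0) 1 0 (by omega)).symm]
    rw [Tm.inst_cons_shift a _ 0]
    exact hmem

theorem fundamental : ∀ {Γ : Ctx} {a : Tm} {k : ℕ} {A : Tm}, Typing Γ a k A →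
    ∀ ρ, EnvOK ρ Γ → Mem k (Tm.inst ρ 0 A) (Tm.inst ρ 0 a) := by
  intro Γ a k A h
  refine Typing.rec (motive_1 := fun _ _ => True)
    (motive_2 := fun Γ a k A _ =>
      ∀ ρ, EnvOK ρ Γ → Mem k (Tm.inst ρ 0 A) (Tm.inst ρ 0 a))
    ?_ ?_ ?_ ?_ ?_ ?_ ?_ ?_ ?_ ?_ h
  · trivial
  · intros; trivial
  -- star
  · intro Γ k _ _ ρ hρ
    exact ⟨Ui.star, ⟨Ui.star⟩⟩
  -- var
  · intro Γ x j k A _ hx hjk _ ρ hρ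
    have : Tm.inst ρ 0 (Tm.var x) = ρ x := by
      rw [Tm.inst_var, if_neg (by omega), Nat.sub_zero]
    rw [this]
    exact mem_mono hjk (hρ.2 x j A hx)
  -- pi
  · intro Γ j k A B hjk hA hB ihA ihB ρ hρ
    refine ⟨Ui.star, ?_⟩
    show Nonempty (U k (Tm.pi j (Tm.inst ρ 0 A) (Tm.inst ρ 1 B)))
    rcases ihA ρ hρ with ⟨uA, helA⟩
    have hNA : Nonempty (U j (Tm.inst ρ 0 A)) := (el_star_inv uA .refl _).mp helA
    have hA' : (low k).1 j (Tm.inst ρ 0 A) := low1_iff.mpr ⟨hjk, hNA⟩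
    have key : ∀ a, Tm.Closed a → (low k).2 j (Tm.inst ρ 0 A) a →
        Nonempty (U k (Tm.subst 0 a (Tm.inst ρ 1 B))) := by
      intro a ca ha
      have hm : Mem j (Tm.inst ρ 0 A) a := (low2_iff.mp ha).2
      rcases ihB (Tm.consEnv a ρ) (envOK_cons hρ ca hm) with ⟨uB, helB⟩
      have : Nonempty (U k (Tm.inst (Tm.consEnv a ρ) 0 B)) :=
        (el_star_inv uB .refl _).mp helB
      rwa [← Tm.subst_inst hρ.1 ca B 0] at this
    exact ⟨Ui.pi j (Tm.inst ρ 0 A) (Tm.inst ρ 1 B) hjk hA'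
      fun a ca ha => Classical.choice (key a ca ha)⟩
  -- lam
  · intro Γ j k A B b hjk hA hb ihA ihb ρ hρ
    rcases ihA ρ hρ with ⟨uA, helA⟩
    have hNA : Nonempty (U j (Tm.inst ρ 0 A)) := (el_star_inv uA .refl _).mp helA
    have hA' : (low k).1 j (Tm.inst ρ 0 A) := low1_iff.mpr ⟨hjk, hNA⟩
    have key : ∀ a, Tm.Closed a → (low k).2 j (Tm.inst ρ 0 A) a →
        ∃ u : U k (Tm.subst 0 a (Tm.inst ρ 1 B)),
          el u (Tm.subst 0 a (Tm.inst ρ 1 b)) := by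
      intro a ca ha
      have hm : Mem j (Tm.inst ρ 0 A) a := (low2_iff.mp ha).2
      have := ihb (Tm.consEnv a ρ) (envOK_cons hρ ca hm)
      rw [← Tm.subst_inst hρ.1 ca B 0, ← Tm.subst_inst hρ.1 ca b 0] at this
      exact this
    choose uB hB using key
    refine ⟨Ui.pi j (Tm.inst ρ 0 A) (Tm.inst ρ 1 B) hjk hA' uB, ?_⟩
    show ∀ a ca ha, el (uB a ca ha) (Tm.app (Tm.lam (Tm.inst ρ 1 b)) a)
    intro a ca ha
    exact el_bwd (uB a ca ha) (Par.beta (parRefl _) (parRefl _)) (hB a ca ha)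
  -- app
  · intro Γ j k A B b a hb ha ihb iha ρ hρ
    have egoal : Tm.inst ρ 0 (Tm.subst 0 a B)
        = Tm.subst 0 (Tm.inst ρ 0 a) (Tm.inst ρ 1 B) := Tm.inst_subst hρ.1 B 0 0 a
    rw [egoal]
    rcases ihb ρ hρ with ⟨u, helu⟩
    rcases el_pi_inv u .refl with ⟨hj, hA', uB', hiff⟩
    rcases iha ρ hρ with ⟨v, helv⟩
    have ha' : (low k).2 j (Tm.inst ρ 0 A) (Tm.inst ρ 0 a) :=
      low2_iff.mpr ⟨hj, v, helv⟩
    have ca : Tm.Closed (Tm.inst ρ 0 a) := Tm.inst_closedAbove hρ.1 a 0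
    exact ⟨uB' _ ca ha', (hiff _).mp helu _ ca ha'⟩
  -- bot
  · intro Γ k _ _ ρ hρ
    exact ⟨Ui.star, ⟨Ui.bot⟩⟩
  -- absurd
  · intro Γ k b A hb hA ihb ihA ρ hρ
    rcases ihb ρ hρ with ⟨u, helu⟩
    exact absurd ((el_bot_inv u .refl _).mp helu) not_false
  -- conv
  · intro Γ k a A B ha hAB hB iha ihB ρ hρ
    rcases iha ρ hρ with ⟨u, helu⟩
    rcases ihB ρ hρ with ⟨s, hels⟩
    rcases (el_star_inv s .refl _).mp hels with ⟨v⟩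
    have cv : Conv (Tm.inst ρ 0 A) (Tm.inst ρ 0 B) := conv_inst hρ.1 (deq_conv hAB) 0
    exact ⟨v, el_conv (le_refl k) cv u v _ helu⟩

/-- **Logical consistency of subStraTT**: there is no closed inhabitant of the
empty type at any level. -/
theorem substratt_consistency : ¬ ∃ (b : Tm) (k : ℕ), Typing [] b k Tm.bot := by
  rintro ⟨b, k, h⟩
  have henv : EnvOK (fun _ => Tm.star) [] := by
    refine ⟨fun x => trivial, ?_⟩
    intro x j A hx
    cases x <;> exact nomatch (show (none : Option (ℕ × Tm)) = some (j, A) from hx)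
  rcases fundamental h (fun _ => Tm.star) henv with ⟨u, hel⟩
  exact (el_bot_inv u .refl _).mp hel
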